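/- For any natural numbers a, n ≥ 1 and any prime q, the power sum S_n(q^a) = ∑_{i=1}^{q^a} i^n is divisible by q^(a-1). -/

import Mathlib

def S (n m : ℕ) : ℕ := ∑ i ∈ Finset.Icc 1 m, i ^ n

lemma S_range (n m : ℕ) : S n m = ∑ i ∈ Finset.range m, (i + 1) ^ n := by
  induction m with
  | zero => simp [S]
  | succ m ih =>
    rw [S, Finset.sum_Icc_succ_top (by omega), ← S, ih, Finset.sum_range_succ]

lemma key (n M k : ℕ) : ((S n (k * M) : ZMod M)) = k * (S n M : ZMod M) := by
  induction k with
  | zero => simp [S]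
  | succ k ih =>
    have h : (k + 1) * M = k * M + M := by ring
    rw [h, S_range, Finset.sum_range_add, ← S_range]
    push_cast
    rw [ih]
    have : ∀ i ∈ Finset.range M,
        (((k * M + i + 1 : ℕ) : ZMod M)) ^ n = ((i + 1 : ℕ) : ZMod M) ^ n := by
      intro i _
      push_cast
      rw [ZMod.natCast_self]
      ring_nf
    rw [Finset.sum_congr rfl (by intro i hi; exact_mod_cast this i hi)]
    rw [← Nat.cast_sum, ← S_range]
    ring

theorem stmt3 (n a q : ℕ) (hn : 1 ≤ n) (ha : 1 ≤ a) (hq : q.Prime) :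
    q ^ (a - 1) ∣ S n (q ^ a) := by
  induction a with
  | zero => omega
  | succ a ih =>
    rcases Nat.eq_or_lt_of_le ha with h1 | h1
    · simp [← h1]
    · have ha' : 1 ≤ a := by omega
      have IH := ih ha'
      haveI : NeZero (q ^ a) := ⟨pow_ne_zero _ hq.pos.ne'⟩
      have hmod : (q ^ a : ℕ) ∣ S n (q ^ (a + 1)) := by
        rw [← ZMod.natCast_eq_zero_iff]
        have hk := key n (q ^ a) q
        have hpow : q ^ (a + 1) = q * q ^ a := by ring
        rw [hpow, hk]
        obtain ⟨c, hc⟩ := IH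
        rw [hc]
        push_cast
        have h0 : ((q : ZMod (q^a)) * (q:ZMod (q^a)) ^ (a-1)) = ((q^a : ℕ) : ZMod (q^a)) := by
          push_cast
          rw [← pow_succ']
          congr 1
          omega
        calc (q : ZMod (q^a)) * ((q:ZMod (q^a)) ^ (a-1) * c)
            = ((q : ZMod (q^a)) * (q:ZMod (q^a)) ^ (a-1)) * c := by ring
          _ = 0 := by rw [h0, ZMod.natCast_self, zero_mul]
      simpa using hmod
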